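/- The mean of the squared doubly-demeaned treatment equals the total two-way fixed-effects weight: 𝒯^{−1}·Σ_{t=1}^{𝒯} E[Ẅ_t²] = Σ_{g=2}^{𝒯} Var(D | G = g)·(1 − Ḡ_g)·Ḡ_g·p_g + Σ_{2 ≤ g < k ≤ 𝒯+1} [ (E[D | G = g])²·(1 − Ḡ_g)·(Ḡ_g − Ḡ_k) + (E[D | G = k])²·Ḡ_k·(Ḡ_g − Ḡ_k) + (E[D | G = g] − E[D | G = k])²·Ḡ_k·(1 − Ḡ_g) ]·p_g·p_k, where Var(D | A) := E[D² | A] − (E[D | A])². -/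

import Mathlib

open MeasureTheory

/-- Conditional expectation of `X` given the event `A`: `E[X | A] = E[X·1_A] / P(A)`. -/
noncomputable def cExp {Ω : Type*} [MeasurableSpace Ω] (P : Measure Ω)
    (X : Ω → ℝ) (A : Set Ω) : ℝ :=
  (∫ ω in A, X ω ∂P) / (P A).toReal

/-- Fraction of periods that group `g` spends treated: `Ḡ_g = (T − g + 1)/T` for
`g ∈ {2,…,T}` and `Ḡ_{T+1} = 0`. -/
noncomputable def gBar (T g : ℕ) : ℝ :=
  if g = T + 1 then 0 else ((T : ℝ) - (g : ℝ) + 1) / (T : ℝ)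

/-- `v(g, t) = 1{t ≥ g} − Ḡ_g` for `g ∈ {2,…,T}` and `v(T+1, t) = 0`. -/
noncomputable def vW (T g t : ℕ) : ℝ :=
  if g = T + 1 then 0 else (if g ≤ t then 1 else 0) - gBar T g

section Aux

lemma sum_ind (T g : ℕ) (hg : 1 ≤ g) :
    ∑ s ∈ Finset.Icc 1 T, (if g ≤ s then (1:ℝ) else 0) = ((T + 1 - g : ℕ) : ℝ) := by
  rw [Finset.sum_boole]
  congr 1
  have : (Finset.Icc 1 T).filter (fun s => g ≤ s) = Finset.Icc g T := by
    ext s; simp [Finset.mem_Icc, Finset.mem_filter]; omega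
  rw [this, Nat.card_Icc]

lemma vW_key (T : ℕ) (hT : 2 ≤ T) (g : ℕ) (hg2 : 2 ≤ g) (hg : g ≤ T + 1)
    (t : ℕ) (ht : t ≤ T) (x : ℝ) :
    (if g ≤ t then x else 0) -
      (1 / (T : ℝ)) * ∑ s ∈ Finset.Icc 1 T, (if g ≤ s then x else 0) = x * vW T g t := by
  have hsum : ∑ s ∈ Finset.Icc 1 T, (if g ≤ s then x else 0)
      = x * ((T + 1 - g : ℕ) : ℝ) := by
    rw [← sum_ind T g (by omega), Finset.mul_sum]
    exact Finset.sum_congr rfl (fun s _ => by split <;> simp)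
  rw [hsum, vW]
  rcases eq_or_lt_of_le hg with h | h
  · have h1 : ¬ (g ≤ t) := by omega
    have h2 : T + 1 - g = 0 := by omega
    simp [h, h2]
    intro hc; omega
  · have hgT : g ≤ T := by omega
    have hne : g ≠ T + 1 := by omega
    have hcast : ((T + 1 - g : ℕ) : ℝ) = (T : ℝ) + 1 - (g : ℝ) := by
      have : g ≤ T + 1 := by omega
      push_cast [Nat.cast_sub this]
      ring
    have hT0 : (T : ℝ) ≠ 0 := by positivity
    rw [hcast, gBar, if_neg hne]
    split <;> field_simp <;> ring

lemma vW_prod_sum (T : ℕ) (hT : 2 ≤ T) (g k : ℕ) (hg2 : 2 ≤ g) (hg : g ≤ T + 1)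
    (hk2 : 2 ≤ k) (hk : k ≤ T + 1) :
    ∑ t ∈ Finset.Icc 1 T, vW T g t * vW T k t
      = (T : ℝ) * (gBar T (max g k) - gBar T g * gBar T k) := by
  have hT0 : (T : ℝ) ≠ 0 := by positivity
  rcases eq_or_lt_of_le hg with h | h
  · have e1 : ∀ t, vW T g t = 0 := fun t => by simp [vW, h]
    have e2 : gBar T (max g k) = 0 := by
      have hmax : max g k = T + 1 := by omega
      simp [gBar, hmax]
    have e3 : gBar T g = 0 := by simp [gBar, h]
    simp [e1, e2, e3]
  rcases eq_or_lt_of_le hk with h' | h'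
  · have e1 : ∀ t, vW T k t = 0 := fun t => by simp [vW, h']
    have e2 : gBar T (max g k) = 0 := by
      have hmax : max g k = T + 1 := by omega
      simp [gBar, hmax]
    have e3 : gBar T k = 0 := by simp [gBar, h']
    simp [e1, e2, e3]
  · have hgT : g ≤ T := by omega
    have hkT : k ≤ T := by omega
    have hgne : g ≠ T + 1 := by omega
    have hkne : k ≠ T + 1 := by omega
    have hmne : max g k ≠ T + 1 := by omega
    have hcast : ∀ m : ℕ, m ≤ T + 1 → ((T + 1 - m : ℕ) : ℝ) = (T:ℝ) + 1 - (m:ℝ) := by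
      intro m hm; push_cast [Nat.cast_sub hm]; ring
    have hGbar : ∀ m : ℕ, 2 ≤ m → m ≤ T → gBar T m = ((T + 1 - m : ℕ):ℝ) / T := by
      intro m h2 hmT
      rw [gBar, if_neg (by omega), hcast m (by omega)]; ring_nf
    have expand : ∀ t, vW T g t * vW T k t
        = (if max g k ≤ t then (1:ℝ) else 0)
          - gBar T k * (if g ≤ t then (1:ℝ) else 0)
          - gBar T g * (if k ≤ t then (1:ℝ) else 0)
          + gBar T g * gBar T k := by
      intro t
      rw [vW, vW, if_neg hgne, if_neg hkne]
      have : (if g ≤ t then (1:ℝ) else 0) * (if k ≤ t then (1:ℝ) else 0)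
          = (if max g k ≤ t then (1:ℝ) else 0) := by
        rcases le_total g k with hgk | hgk <;> split_ifs <;> simp_all <;> omega
      nlinarith [this]
    simp_rw [expand]
    rw [Finset.sum_add_distrib, Finset.sum_sub_distrib, Finset.sum_sub_distrib,
      ← Finset.mul_sum, ← Finset.mul_sum, sum_ind T _ (by omega), sum_ind T _ (by omega),
      sum_ind T _ (by omega), Finset.sum_const, Nat.card_Icc]
    rw [hGbar g hg2 hgT, hGbar k hk2 hkT, hGbar (max g k) (by omega) (by omega)]
    rw [hcast g (by omega), hcast k (by omega), hcast (max g k) (by omega)]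
    simp only [Nat.add_sub_cancel, nsmul_eq_mul]
    field_simp
    ring

lemma tri (a b : ℕ) (F : ℕ → ℕ → ℝ) :
    ∑ g ∈ Finset.Icc a b, ∑ k ∈ Finset.Icc a b, F g k
      = (∑ g ∈ Finset.Icc a b, F g g)
        + ∑ g ∈ Finset.Icc a b, ∑ k ∈ Finset.Icc (g+1) b, (F g k + F k g) := by
  have hIcc : ∀ (c d : ℕ), Finset.Icc c d = Finset.Ico c (d+1) := by
    intro c d; rw [Finset.Ico_add_one_right_eq_Icc]
  simp_rw [hIcc, Finset.sum_add_distrib]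
  have hsplit : ∀ g ∈ Finset.Ico a (b+1),
      ∑ k ∈ Finset.Ico a (b+1), F g k
        = ∑ k ∈ Finset.Ico a g, F g k + F g g + ∑ k ∈ Finset.Ico (g+1) (b+1), F g k := by
    intro g hg
    rw [Finset.mem_Ico] at hg
    rw [← Finset.Ico_union_Ico_eq_Ico (hg.1) (le_of_lt hg.2),
      Finset.sum_union (Finset.Ico_disjoint_Ico_consecutive _ _ _),
      Finset.sum_eq_sum_Ico_succ_bot hg.2, add_assoc]
  rw [Finset.sum_congr rfl hsplit]
  have hswap : ∑ g ∈ Finset.Ico a (b+1), ∑ k ∈ Finset.Ico a g, F g k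
      = ∑ g ∈ Finset.Ico a (b+1), ∑ k ∈ Finset.Ico (g+1) (b+1), F k g := by
    have h1 := Finset.sum_Ico_Ico_comm a (b+1) (fun i j => F j i)
    have h2 : ∀ i ∈ Finset.Ico a (b+1),
        ∑ j ∈ Finset.Ico i (b+1), F j i = F i i + ∑ j ∈ Finset.Ico (i+1) (b+1), F j i := by
      intro i hi
      rw [Finset.mem_Ico] at hi
      exact Finset.sum_eq_sum_Ico_succ_bot hi.2 _
    have h3 : ∀ j ∈ Finset.Ico a (b+1),
        ∑ i ∈ Finset.Ico a (j+1), F j i = ∑ i ∈ Finset.Ico a j, F j i + F j j := by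
      intro j hj
      rw [Finset.mem_Ico] at hj
      rw [← Finset.Ico_union_Ico_eq_Ico hj.1 (Nat.le_succ j),
        Finset.sum_union (Finset.Ico_disjoint_Ico_consecutive _ _ _),
        Nat.Ico_succ_singleton, Finset.sum_singleton]
    rw [Finset.sum_congr rfl h2, Finset.sum_congr rfl h3] at h1
    rw [Finset.sum_add_distrib, Finset.sum_add_distrib] at h1
    linarith [h1]
  rw [Finset.sum_add_distrib, Finset.sum_add_distrib, hswap]
  ring

lemma group_decomp {Ω : Type*} [MeasurableSpace Ω] (P : Measure Ω) [IsProbabilityMeasure P]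
    (T : ℕ) (G : Ω → ℕ) (hG : Measurable G) (hGrange : ∀ ω, 2 ≤ G ω ∧ G ω ≤ T + 1)
    (X : Ω → ℝ) (hX : Integrable X P) (h : ℕ → ℝ) :
    ∫ ω, h (G ω) * X ω ∂P
      = ∑ g ∈ Finset.Icc 2 (T+1), h g * ∫ ω in {ω | G ω = g}, X ω ∂P := by
  have hms : ∀ g : ℕ, MeasurableSet {ω | G ω = g} := fun g => hG (measurableSet_singleton g)
  have key : (fun ω => h (G ω) * X ω)
      = fun ω => ∑ g ∈ Finset.Icc 2 (T+1),
          ({ω | G ω = g}).indicator (fun ω' => h g * X ω') ω := by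
    funext ω
    rw [Finset.sum_eq_single (G ω)]
    · rw [Set.indicator_of_mem (by simp : ω ∈ {ω' | G ω' = G ω})]
    · intro g _ hne
      exact Set.indicator_of_notMem (by simp [Ne.symm hne]) _
    · intro hmem
      exact absurd (Finset.mem_Icc.mpr ⟨(hGrange ω).1, (hGrange ω).2⟩) hmem
  rw [key, integral_finset_sum _
    (fun g _ => (hX.const_mul (h g)).indicator (hms g))]
  refine Finset.sum_congr rfl (fun g _ => ?_)
  rw [integral_indicator (hms g), integral_const_mul]

lemma sum_p_one {Ω : Type*} [MeasurableSpace Ω] (P : Measure Ω) [IsProbabilityMeasure P]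
    (T : ℕ) (G : Ω → ℕ) (hG : Measurable G) (hGrange : ∀ ω, 2 ≤ G ω ∧ G ω ≤ T + 1) :
    ∑ g ∈ Finset.Icc 2 (T+1), (P {ω | G ω = g}).toReal = 1 := by
  have hms : ∀ g : ℕ, MeasurableSet {ω | G ω = g} := fun g => hG (measurableSet_singleton g)
  have : ∑ g ∈ Finset.Icc 2 (T+1), P {ω | G ω = g} = 1 := by
    rw [← measure_biUnion_finset ?_ (fun g _ => hms g)]
    · have : (⋃ g ∈ Finset.Icc 2 (T+1), {ω | G ω = g}) = Set.univ := by
        ext ω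
        simp only [Set.mem_iUnion, Set.mem_setOf_eq, Set.mem_univ, iff_true]
        exact ⟨G ω, Finset.mem_Icc.mpr ⟨(hGrange ω).1, (hGrange ω).2⟩, rfl⟩
      rw [this, measure_univ]
    · intro g _ k _ hgk
      simp only [Function.onFun, Set.disjoint_left]
      rintro ω hω hω'
      exact hgk (hω ▸ hω')
  rw [← ENNReal.toReal_sum (fun g _ => measure_ne_top P _), this, ENNReal.toReal_one]

end Aux

/-- The mean of the squared doubly-demeaned treatment equals the total
TWFE weight:
`T⁻¹·Σ_{t=1}^{T} E[Ẅ_t²] = Σ_{g=2}^{T} Var(D|G=g)·(1 − Ḡ_g)·Ḡ_g·p_g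
  + Σ_{2 ≤ g < k ≤ T+1} [E[D|G=g]²·(1 − Ḡ_g)·(Ḡ_g − Ḡ_k) + E[D|G=k]²·Ḡ_k·(Ḡ_g − Ḡ_k)
      + (E[D|G=g] − E[D|G=k])²·Ḡ_k·(1 − Ḡ_g)]·p_g·p_k`,
where `Ẅ_t = (W_t − T⁻¹·Σ_s W_s) − (E[W_t] − T⁻¹·Σ_s E[W_s])` and `W_t = D·1{t ≥ G}`. -/
theorem twfe_total_weight
    {Ω : Type*} [MeasurableSpace Ω] (P : Measure Ω) [IsProbabilityMeasure P]
    (T : ℕ) (hT : 2 ≤ T)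
    (Dpos : Finset ℝ) (hDposNe : Dpos.Nonempty) (hDposPos : ∀ d ∈ Dpos, (0 : ℝ) < d)
    (D : Ω → ℝ) (hD : Measurable D) (hDi : Integrable D P)
    (G : Ω → ℕ) (hG : Measurable G)
    (hGrange : ∀ ω, 2 ≤ G ω ∧ G ω ≤ T + 1)
    (hDval : ∀ ω, D ω = 0 ∨ D ω ∈ Dpos)
    (hD0G : ∀ ω, D ω = 0 ↔ G ω = T + 1)
    (hpNever : 0 < P {ω | G ω = T + 1})
    (hpgd : ∀ g : ℕ, 2 ≤ g → g ≤ T → ∀ d ∈ Dpos, 0 < P {ω | G ω = g ∧ D ω = d}) :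
    (1 / (T : ℝ)) * ∑ t ∈ Finset.Icc 1 T,
        ∫ ω,
          (((if G ω ≤ t then D ω else 0) -
              (1 / (T : ℝ)) * ∑ s ∈ Finset.Icc 1 T, (if G ω ≤ s then D ω else 0)) -
            ((∫ ω', (if G ω' ≤ t then D ω' else 0) ∂P) -
              (1 / (T : ℝ)) * ∑ s ∈ Finset.Icc 1 T,
                ∫ ω', (if G ω' ≤ s then D ω' else 0) ∂P)) ^ 2 ∂P =
      (∑ g ∈ Finset.Icc 2 T,
        (cExp P (fun ω => D ω ^ 2) {ω | G ω = g} - (cExp P D {ω | G ω = g}) ^ 2) *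
          (1 - gBar T g) * gBar T g * (P {ω | G ω = g}).toReal) +
      ∑ g ∈ Finset.Icc 2 (T + 1), ∑ k ∈ Finset.Icc (g + 1) (T + 1),
        ((cExp P D {ω | G ω = g}) ^ 2 * (1 - gBar T g) * (gBar T g - gBar T k) +
          (cExp P D {ω | G ω = k}) ^ 2 * gBar T k * (gBar T g - gBar T k) +
          (cExp P D {ω | G ω = g} - cExp P D {ω | G ω = k}) ^ 2 *
            gBar T k * (1 - gBar T g)) *
          (P {ω | G ω = g}).toReal * (P {ω | G ω = k}).toReal := by
  have hTpos : (0:ℝ) < (T:ℝ) := by exact_mod_cast (by omega : 0 < T)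
  have hT0 : (T:ℝ) ≠ 0 := ne_of_gt hTpos
  -- abbreviations
  set p : ℕ → ℝ := fun g => (P {ω | G ω = g}).toReal with hp_def
  set muf : ℕ → ℝ := fun g => ∫ ω in {ω | G ω = g}, D ω ∂P with hmu_def
  set qf : ℕ → ℝ := fun g => ∫ ω in {ω | G ω = g}, D ω ^ 2 ∂P with hq_def
  set cc : ℕ → ℕ → ℝ := fun g k => gBar T (max g k) - gBar T g * gBar T k with hcc_def
  -- basic facts
  obtain ⟨d0, hd0⟩ := hDposNe
  have hCex : ∃ C, ∀ ω, ‖D ω‖ ≤ C := by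
    refine ⟨Dpos.sup' ⟨d0, hd0⟩ id, fun ω => ?_⟩
    rcases hDval ω with h | h
    · rw [h, norm_zero]
      exact le_trans (le_of_lt (hDposPos d0 hd0)) (Finset.le_sup' id hd0)
    · rw [Real.norm_eq_abs, abs_of_pos (hDposPos _ h)]
      exact Finset.le_sup' id h
  have hD2i : Integrable (fun ω => D ω ^ 2) P := by
    have h := hDi.bdd_mul hD.aestronglyMeasurable (c := hCex.choose) (Filter.Eventually.of_forall hCex.choose_spec)
    have heq : (fun ω => D ω ^ 2) = fun ω => D ω * D ω := funext fun ω => sq (D ω) ▸ by ring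
    rw [heq]; exact h
  have hvb : ∀ t : ℕ, ∀ ω, ‖vW T (G ω) t‖ ≤ 2 := by
    intro t ω
    rcases hGrange ω with ⟨h2, h3⟩
    rw [vW]
    split
    · simp
    · rename_i hne
      have hgT : G ω ≤ T := by omega
      have h0 : (0:ℝ) ≤ gBar T (G ω) := by
        rw [gBar, if_neg hne]
        apply div_nonneg _ (le_of_lt hTpos)
        have : (G ω : ℝ) ≤ (T:ℝ) := by exact_mod_cast hgT
        linarith
      have h1 : gBar T (G ω) ≤ 1 := by
        rw [gBar, if_neg hne, div_le_one hTpos]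
        have : (2:ℝ) ≤ (G ω : ℝ) := by exact_mod_cast h2
        linarith
      rw [Real.norm_eq_abs]
      split <;> rw [abs_le] <;> constructor <;> linarith
  have hmv : ∀ t : ℕ, Measurable fun ω => vW T (G ω) t :=
    fun t => (measurable_from_top (f := fun g : ℕ => vW T g t)).comp hG
  have hWi : ∀ s : ℕ, Integrable (fun ω => if G ω ≤ s then D ω else 0) P := by
    intro s
    have heq : (fun ω => if G ω ≤ s then D ω else 0)
        = ({ω | G ω ≤ s}).indicator D := by
      funext ω; rw [Set.indicator_apply]; rfl
    rw [heq]
    exact hDi.indicator (hG measurableSet_Iic)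
  have hfi : ∀ t : ℕ, Integrable (fun ω => D ω * vW T (G ω) t) P := by
    intro t
    have h := hDi.bdd_mul (hmv t).aestronglyMeasurable (c := 2) (Filter.Eventually.of_forall (hvb t))
    have heq : (fun ω => D ω * vW T (G ω) t) = fun ω => vW T (G ω) t * D ω :=
      funext fun ω => mul_comm _ _
    rw [heq]; exact h
  have hf2i : ∀ t : ℕ, Integrable (fun ω => (D ω * vW T (G ω) t) ^ 2) P := by
    intro t
    have hb : ∃ C, ∀ ω, ‖(vW T (G ω) t) ^ 2‖ ≤ C := by
      refine ⟨4, fun ω => ?_⟩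
      rw [norm_pow]
      calc ‖vW T (G ω) t‖ ^ 2 ≤ 2 ^ 2 := by
            apply pow_le_pow_left₀ (norm_nonneg _) (hvb t ω)
        _ = 4 := by norm_num
    have h := hD2i.bdd_mul ((hmv t).pow_const 2).aestronglyMeasurable (c := hb.choose) (Filter.Eventually.of_forall hb.choose_spec)
    have heq : (fun ω => (D ω * vW T (G ω) t) ^ 2)
        = fun ω => (vW T (G ω) t) ^ 2 * D ω ^ 2 := funext fun ω => by ring
    rw [heq]; exact h
  -- per-t computation
  have hE : ∀ t ∈ Finset.Icc 1 T,
      (∫ ω', (if G ω' ≤ t then D ω' else 0) ∂P) -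
        (1 / (T : ℝ)) * ∑ s ∈ Finset.Icc 1 T, ∫ ω', (if G ω' ≤ s then D ω' else 0) ∂P
      = ∫ ω, D ω * vW T (G ω) t ∂P := by
    intro t ht
    rw [Finset.mem_Icc] at ht
    have hpt : ∀ ω, D ω * vW T (G ω) t
        = (if G ω ≤ t then D ω else 0) -
          (1 / (T : ℝ)) * ∑ s ∈ Finset.Icc 1 T, (if G ω ≤ s then D ω else 0) :=
      fun ω => (vW_key T hT (G ω) (hGrange ω).1 (hGrange ω).2 t ht.2 (D ω)).symm
    rw [show (fun ω => D ω * vW T (G ω) t)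
        = fun ω => (if G ω ≤ t then D ω else 0) -
            (1 / (T : ℝ)) * ∑ s ∈ Finset.Icc 1 T, (if G ω ≤ s then D ω else 0)
      from funext hpt]
    rw [integral_sub (hWi t) (((integrable_finset_sum _ (fun s _ => hWi s)).const_mul _))]
    rw [integral_const_mul, integral_finset_sum _ (fun s _ => hWi s)]
  have hInt : ∀ t ∈ Finset.Icc 1 T,
      (∫ ω,
          (((if G ω ≤ t then D ω else 0) -
              (1 / (T : ℝ)) * ∑ s ∈ Finset.Icc 1 T, (if G ω ≤ s then D ω else 0)) -
            ((∫ ω', (if G ω' ≤ t then D ω' else 0) ∂P) -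
              (1 / (T : ℝ)) * ∑ s ∈ Finset.Icc 1 T,
                ∫ ω', (if G ω' ≤ s then D ω' else 0) ∂P)) ^ 2 ∂P)
      = (∫ ω, (D ω * vW T (G ω) t) ^ 2 ∂P) - (∫ ω, D ω * vW T (G ω) t ∂P) ^ 2 := by
    intro t ht
    have htT : t ≤ T := (Finset.mem_Icc.mp ht).2
    set I : ℝ := ∫ ω, D ω * vW T (G ω) t ∂P with hI_def
    have hpt : ∀ ω, ((if G ω ≤ t then D ω else 0) -
              (1 / (T : ℝ)) * ∑ s ∈ Finset.Icc 1 T, (if G ω ≤ s then D ω else 0)) -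
            ((∫ ω', (if G ω' ≤ t then D ω' else 0) ∂P) -
              (1 / (T : ℝ)) * ∑ s ∈ Finset.Icc 1 T,
                ∫ ω', (if G ω' ≤ s then D ω' else 0) ∂P)
        = D ω * vW T (G ω) t - I := by
      intro ω
      rw [vW_key T hT (G ω) (hGrange ω).1 (hGrange ω).2 t htT (D ω), hE t ht]
    rw [show (fun ω => (((if G ω ≤ t then D ω else 0) -
              (1 / (T : ℝ)) * ∑ s ∈ Finset.Icc 1 T, (if G ω ≤ s then D ω else 0)) -
            ((∫ ω', (if G ω' ≤ t then D ω' else 0) ∂P) -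
              (1 / (T : ℝ)) * ∑ s ∈ Finset.Icc 1 T,
                ∫ ω', (if G ω' ≤ s then D ω' else 0) ∂P)) ^ 2)
        = fun ω => (D ω * vW T (G ω) t) ^ 2 - (2 * I) * (D ω * vW T (G ω) t) + I ^ 2
      from funext fun ω => by rw [hpt ω]; ring]
    have hb : Integrable (fun ω => 2 * I * (D ω * vW T (G ω) t)) P := by
      exact (hfi t).const_mul (2 * I)
    have ha : Integrable
        (fun ω => (D ω * vW T (G ω) t) ^ 2 - 2 * I * (D ω * vW T (G ω) t)) P := by
      exact (hf2i t).sub hb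
    rw [integral_add ha (integrable_const _)]
    rw [integral_sub (hf2i t) hb]
    rw [integral_const_mul, integral_const]
    simp only [probReal_univ, smul_eq_mul, one_mul]
    rw [← hI_def]
    ring
  -- group decomposition of the two moments
  have hIg : ∀ t : ℕ, (∫ ω, D ω * vW T (G ω) t ∂P)
      = ∑ g ∈ Finset.Icc 2 (T+1), vW T g t * muf g := by
    intro t
    rw [show (fun ω => D ω * vW T (G ω) t) = fun ω => vW T (G ω) t * D ω
      from funext fun ω => mul_comm _ _]
    exact group_decomp P T G hG hGrange D hDi (fun g => vW T g t)
  have hQg : ∀ t : ℕ, (∫ ω, (D ω * vW T (G ω) t) ^ 2 ∂P)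
      = ∑ g ∈ Finset.Icc 2 (T+1), (vW T g t) ^ 2 * qf g := by
    intro t
    rw [show (fun ω => (D ω * vW T (G ω) t) ^ 2)
        = fun ω => (vW T (G ω) t) ^ 2 * D ω ^ 2 from funext fun ω => by ring]
    exact group_decomp P T G hG hGrange (fun ω => D ω ^ 2) hD2i (fun g => (vW T g t) ^ 2)
  -- LHS reduction
  have hLHS : (1 / (T : ℝ)) * ∑ t ∈ Finset.Icc 1 T,
        ∫ ω,
          (((if G ω ≤ t then D ω else 0) -
              (1 / (T : ℝ)) * ∑ s ∈ Finset.Icc 1 T, (if G ω ≤ s then D ω else 0)) -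
            ((∫ ω', (if G ω' ≤ t then D ω' else 0) ∂P) -
              (1 / (T : ℝ)) * ∑ s ∈ Finset.Icc 1 T,
                ∫ ω', (if G ω' ≤ s then D ω' else 0) ∂P)) ^ 2 ∂P
      = (∑ g ∈ Finset.Icc 2 (T+1), qf g * cc g g)
        - ∑ g ∈ Finset.Icc 2 (T+1), ∑ k ∈ Finset.Icc 2 (T+1), (muf g * muf k) * cc g k := by
    rw [Finset.sum_congr rfl hInt]
    have step : ∀ t ∈ Finset.Icc 1 T,
        (∫ ω, (D ω * vW T (G ω) t) ^ 2 ∂P) - (∫ ω, D ω * vW T (G ω) t ∂P) ^ 2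
        = (∑ g ∈ Finset.Icc 2 (T+1), (vW T g t * vW T g t) * qf g)
          - ∑ g ∈ Finset.Icc 2 (T+1), ∑ k ∈ Finset.Icc 2 (T+1),
              (vW T g t * vW T k t) * (muf g * muf k) := by
      intro t _
      rw [hIg t, hQg t]
      congr 1
      · exact Finset.sum_congr rfl fun g _ => by rw [pow_two]
      · rw [pow_two, Finset.sum_mul_sum]
        exact Finset.sum_congr rfl fun g _ => Finset.sum_congr rfl fun k _ => by ring
    rw [Finset.sum_congr rfl step]
    rw [Finset.sum_sub_distrib, mul_sub]
    congr 1
    · rw [Finset.sum_comm, Finset.mul_sum]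
      refine Finset.sum_congr rfl fun g hg => ?_
      rw [Finset.mem_Icc] at hg
      rw [← Finset.sum_mul, vW_prod_sum T hT g g hg.1 hg.2 hg.1 hg.2]
      rw [hcc_def]
      field_simp
    · rw [Finset.sum_comm, Finset.mul_sum]
      refine Finset.sum_congr rfl fun g hg => ?_
      rw [Finset.sum_comm, Finset.mul_sum]
      refine Finset.sum_congr rfl fun k hk => ?_
      rw [Finset.mem_Icc] at hg hk
      rw [← Finset.sum_mul, vW_prod_sum T hT g k hg.1 hg.2 hk.1 hk.2]
      rw [hcc_def]
      field_simp
  rw [hLHS]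
  -- RHS reduction
  have hp_pos : ∀ g ∈ Finset.Icc 2 (T+1), 0 < p g := by
    intro g hg
    rw [Finset.mem_Icc] at hg
    rcases eq_or_lt_of_le hg.2 with h | h
    · rw [hp_def]
      exact ENNReal.toReal_pos (by rw [h]; exact ne_of_gt hpNever) (measure_ne_top P _)
    · have := hpgd g hg.1 (by omega) d0 hd0
      have hsub : P {ω | G ω = g ∧ D ω = d0} ≤ P {ω | G ω = g} :=
        measure_mono (fun ω hω => hω.1)
      rw [hp_def]
      exact ENNReal.toReal_pos (ne_of_gt (lt_of_lt_of_le this hsub)) (measure_ne_top P _)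
  have hsum1 : ∑ g ∈ Finset.Icc 2 (T+1), p g = 1 := sum_p_one P T G hG hGrange
  have hgBarT1 : gBar T (T+1) = 0 := by simp [gBar]
  have hccgg : ∀ g, cc g g = gBar T g - gBar T g * gBar T g := by
    intro g; rw [hcc_def]; simp [max_self]
  have hccsymm : ∀ g k, cc k g = cc g k := by
    intro g k; rw [hcc_def]; simp [max_comm]; ring
  -- rewrite cExp
  have hcExpD : ∀ g, cExp P D {ω | G ω = g} = muf g / p g := fun g => rfl
  have hcExpD2 : ∀ g, cExp P (fun ω => D ω ^ 2) {ω | G ω = g} = qf g / p g := fun g => rfl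
  -- define a
  set av : ℕ → ℝ := fun g => muf g ^ 2 * cc g g / p g with hav_def
  -- first RHS sum
  have hRHS1 : (∑ g ∈ Finset.Icc 2 T,
        (cExp P (fun ω => D ω ^ 2) {ω | G ω = g} - (cExp P D {ω | G ω = g}) ^ 2) *
          (1 - gBar T g) * gBar T g * (P {ω | G ω = g}).toReal)
      = ∑ g ∈ Finset.Icc 2 (T+1), (qf g * cc g g - av g) := by
    have hsplit := Finset.sum_Icc_succ_top (by omega : 2 ≤ T + 1)
      (fun g => (qf g * cc g g - av g))
    rw [hsplit]
    have hccT : cc (T+1) (T+1) = 0 := by rw [hccgg, hgBarT1]; ring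
    have hlast : qf (T+1) * cc (T+1) (T+1) - av (T+1) = 0 := by
      have havT : av (T+1) = 0 := by
        show muf (T+1) ^ 2 * cc (T+1) (T+1) / p (T+1) = 0
        rw [hccT]; ring
      rw [hccT, havT]; ring
    rw [hlast, add_zero]
    refine Finset.sum_congr rfl fun g hg => ?_
    rw [Finset.mem_Icc] at hg
    have hpg : p g ≠ 0 := ne_of_gt (hp_pos g (Finset.mem_Icc.mpr ⟨hg.1, by omega⟩))
    show (qf g / p g - (muf g / p g) ^ 2) * (1 - gBar T g) * gBar T g * p g
      = qf g * cc g g - muf g ^ 2 * cc g g / p g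
    rw [hccgg]
    field_simp
  -- second RHS sum
  have hRHS2 : (∑ g ∈ Finset.Icc 2 (T + 1), ∑ k ∈ Finset.Icc (g + 1) (T + 1),
        ((cExp P D {ω | G ω = g}) ^ 2 * (1 - gBar T g) * (gBar T g - gBar T k) +
          (cExp P D {ω | G ω = k}) ^ 2 * gBar T k * (gBar T g - gBar T k) +
          (cExp P D {ω | G ω = g} - cExp P D {ω | G ω = k}) ^ 2 *
            gBar T k * (1 - gBar T g)) *
          (P {ω | G ω = g}).toReal * (P {ω | G ω = k}).toReal)
      = ∑ g ∈ Finset.Icc 2 (T+1), ∑ k ∈ Finset.Icc (g+1) (T+1),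
          (av g * p k + av k * p g - 2 * ((muf g * muf k) * cc g k)) := by
    refine Finset.sum_congr rfl fun g hg => Finset.sum_congr rfl fun k hk => ?_
    rw [Finset.mem_Icc] at hg hk
    have hgk : g < k := by omega
    have hkmem : k ∈ Finset.Icc 2 (T+1) := Finset.mem_Icc.mpr ⟨by omega, hk.2⟩
    have hpg : p g ≠ 0 := ne_of_gt (hp_pos g (Finset.mem_Icc.mpr ⟨hg.1, hg.2⟩))
    have hpk : p k ≠ 0 := ne_of_gt (hp_pos k hkmem)
    have hcgk : cc g k = gBar T k - gBar T g * gBar T k := by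
      rw [hcc_def]
      simp only [max_eq_right (le_of_lt hgk)]
    show ((muf g / p g) ^ 2 * (1 - gBar T g) * (gBar T g - gBar T k) +
        (muf k / p k) ^ 2 * gBar T k * (gBar T g - gBar T k) +
        (muf g / p g - muf k / p k) ^ 2 * gBar T k * (1 - gBar T g)) * p g * p k
      = muf g ^ 2 * cc g g / p g * p k + muf k ^ 2 * cc k k / p k * p g
        - 2 * ((muf g * muf k) * cc g k)
    rw [hccgg g, hccgg k, hcgk]
    field_simp
    ring
  rw [hRHS1, hRHS2]
  -- final algebra
  have htri1 := tri 2 (T+1) (fun g k => (muf g * muf k) * cc g k)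
  have htri2 := tri 2 (T+1) (fun g k => av g * p k)
  have hsymmsum : ∑ g ∈ Finset.Icc 2 (T+1), ∑ k ∈ Finset.Icc (g+1) (T+1),
        ((muf g * muf k) * cc g k + (muf k * muf g) * cc k g)
      = ∑ g ∈ Finset.Icc 2 (T+1), ∑ k ∈ Finset.Icc (g+1) (T+1),
        (2 * ((muf g * muf k) * cc g k)) := by
    refine Finset.sum_congr rfl fun g _ => Finset.sum_congr rfl fun k _ => ?_
    rw [hccsymm g k]; ring
  have hprod : ∑ g ∈ Finset.Icc 2 (T+1), ∑ k ∈ Finset.Icc 2 (T+1), av g * p k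
      = ∑ g ∈ Finset.Icc 2 (T+1), av g := by
    rw [← Finset.sum_mul_sum, hsum1, mul_one]
  have hdiag : ∑ g ∈ Finset.Icc 2 (T+1), av g * p g
      = ∑ g ∈ Finset.Icc 2 (T+1), (muf g * muf g) * cc g g := by
    refine Finset.sum_congr rfl fun g hg => ?_
    have hpg : p g ≠ 0 := ne_of_gt (hp_pos g hg)
    show muf g ^ 2 * cc g g / p g * p g = (muf g * muf g) * cc g g
    rw [div_mul_cancel₀ _ hpg]
    ring
  rw [hsymmsum] at htri1
  rw [hprod] at htri2
  rw [htri1]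
  -- remaining linear identity
  have hexp : ∑ g ∈ Finset.Icc 2 (T+1), ∑ k ∈ Finset.Icc (g+1) (T+1),
        (av g * p k + av k * p g - 2 * ((muf g * muf k) * cc g k))
      = (∑ g ∈ Finset.Icc 2 (T+1), ∑ k ∈ Finset.Icc (g+1) (T+1), (av g * p k + av k * p g))
        - ∑ g ∈ Finset.Icc 2 (T+1), ∑ k ∈ Finset.Icc (g+1) (T+1),
            (2 * ((muf g * muf k) * cc g k)) := by
    rw [← Finset.sum_sub_distrib]
    exact Finset.sum_congr rfl fun g _ => by rw [← Finset.sum_sub_distrib]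
  rw [hexp]
  have hV : ∑ g ∈ Finset.Icc 2 (T+1), ∑ k ∈ Finset.Icc (g+1) (T+1), (av g * p k + av k * p g)
      = (∑ g ∈ Finset.Icc 2 (T+1), av g) - ∑ g ∈ Finset.Icc 2 (T+1), av g * p g := by
    linarith [htri2]
  rw [hV, hdiag]
  rw [Finset.sum_sub_distrib]
  ring
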